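/- Regret bound (off-policy form): Under the same setup (π₂ optimal under r for entropy-regularized RL, α = max_s D_TV(π₁(·|s), π₂(·|s)), ε = max_{s,a}|A_{π₂}(s,a)|, ΔA as before), |U_r(π₁) − U_r(π₂) − Σ_{t≥0} γ^t E_{s_t∼π₂}[ΔA(s_t)]| ≤ 2αγ(2α+1)ε/(1−γ)². -/

import Mathlib

open Finset




lemma tele_summable (γ : ℝ) (hγ0 : 0 ≤ γ) (hγ1 : γ < 1) (f : ℕ → ℝ) (C : ℝ)
    (hf : ∀ t, |f t| ≤ C) :
    Summable (fun t : ℕ => γ ^ t * f t - γ ^ (t+1) * f (t+1)) := by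
  have hgb : ∀ t, |γ ^ t * f t| ≤ C * γ ^ t := by
    intro t
    rw [abs_mul, abs_pow, abs_of_nonneg hγ0, mul_comm]
    exact mul_le_mul_of_nonneg_right (hf t) (pow_nonneg hγ0 t)
  apply Summable.of_norm_bounded (g := fun t => C * γ ^ t + C * γ ^ (t+1))
  · exact ((summable_geometric_of_lt_one hγ0 hγ1).mul_left C).add
      (((summable_geometric_of_lt_one hγ0 hγ1).mul_left C).comp_injective
        (add_left_injective 1))
  · intro t
    calc ‖γ ^ t * f t - γ ^ (t+1) * f (t+1)‖
        ≤ |γ ^ t * f t| + |γ ^ (t+1) * f (t+1)| := norm_sub_le _ _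
      _ ≤ C * γ ^ t + C * γ ^ (t+1) := add_le_add (hgb t) (hgb (t+1))

lemma geo_summable (γ : ℝ) (hγ0 : 0 ≤ γ) (hγ1 : γ < 1) (f : ℕ → ℝ) (C : ℝ)
    (hf : ∀ t, |f t| ≤ C) : Summable (fun t : ℕ => γ ^ t * f t) := by
  apply Summable.of_norm_bounded (g := fun t => C * γ ^ t)
    ((summable_geometric_of_lt_one hγ0 hγ1).mul_left C)
  intro t
  rw [Real.norm_eq_abs, abs_mul, abs_pow, abs_of_nonneg hγ0, mul_comm]
  exact mul_le_mul_of_nonneg_right (hf t) (pow_nonneg hγ0 t)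

lemma wsum_abs_le {S : Type*} [Fintype S] (w x : S → ℝ)
    (hw1 : ∀ s, 0 ≤ w s) (hw2 : ∑ s, w s = 1) (C : ℝ) (hx : ∀ s, |x s| ≤ C) :
    |∑ s, w s * x s| ≤ C := by
  calc |∑ s, w s * x s| ≤ ∑ s, |w s * x s| := Finset.abs_sum_le_sum_abs _ _
    _ ≤ ∑ s, w s * C := by
        apply Finset.sum_le_sum; intro s _
        rw [abs_mul, abs_of_nonneg (hw1 s)]
        exact mul_le_mul_of_nonneg_left (hx s) (hw1 s)
    _ = C := by rw [← Finset.sum_mul, hw2, one_mul]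

lemma tele_tsum (γ : ℝ) (hγ0 : 0 ≤ γ) (hγ1 : γ < 1) (f : ℕ → ℝ) (C : ℝ)
    (hf : ∀ t, |f t| ≤ C) :
    ∑' t : ℕ, (γ ^ t * f t - γ ^ (t+1) * f (t+1)) = f 0 := by
  set g : ℕ → ℝ := fun t => γ ^ t * f t with hg
  have hC : 0 ≤ C := le_trans (abs_nonneg _) (hf 0)
  have hgb : ∀ t, |g t| ≤ C * γ ^ t := by
    intro t
    simp only [hg, abs_mul, abs_pow, abs_of_nonneg hγ0]
    rw [mul_comm]
    exact mul_le_mul_of_nonneg_right (hf t) (pow_nonneg hγ0 t)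
  have hsum : Summable (fun t => g t - g (t+1)) := tele_summable γ hγ0 hγ1 f C hf
  have h1 : Filter.Tendsto (fun n => ∑ i ∈ range n, (g i - g (i+1))) Filter.atTop
      (nhds (∑' t : ℕ, (g t - g (t+1)))) := hsum.hasSum.tendsto_sum_nat
  have h2 : Filter.Tendsto (fun n => ∑ i ∈ range n, (g i - g (i+1))) Filter.atTop
      (nhds (g 0)) := by
    have heq : ∀ n, ∑ i ∈ range n, (g i - g (i+1)) = g 0 - g n := fun n =>
      Finset.sum_range_sub' g n
    simp only [heq]
    have : Filter.Tendsto g Filter.atTop (nhds 0) := by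
      apply squeeze_zero_norm hgb
      simpa using (tendsto_pow_atTop_nhds_zero_of_lt_one hγ0 hγ1).const_mul C
    simpa using (tendsto_const_nhds.sub this)
  have := tendsto_nhds_unique h1 h2
  simpa [hg] using this

lemma value_identity {S A : Type*} [Fintype S] [Fintype A]
    (γ : ℝ) (hγ0 : 0 ≤ γ) (hγ1 : γ < 1)
    (r : S → A → ℝ) (Ptr : S → A → S → ℝ)
    (hPtr : ∀ s a, (∀ s', 0 ≤ Ptr s a s') ∧ ∑ s', Ptr s a s' = 1)
    (π : S → A → ℝ) (hπ : ∀ s, (∀ a, 0 ≤ π s a) ∧ ∑ a, π s a = 1)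
    (dd : ℕ → S → ℝ) (hdd : ∀ t, (∀ s, 0 ≤ dd t s) ∧ ∑ s, dd t s = 1)
    (hsucc : ∀ t s', dd (t+1) s' = ∑ s, ∑ a, dd t s * π s a * Ptr s a s')
    (Q : S → A → ℝ) (V : S → ℝ)
    (hQ : ∀ s a, Q s a = r s a + γ * ∑ s', Ptr s a s' * V s') :
    ∑' t : ℕ, γ ^ t * ∑ s, ∑ a, dd t s * π s a * r s a
      = (∑ s, dd 0 s * V s)
        + ∑' t : ℕ, γ ^ t * ∑ s, dd t s * ((∑ a, π s a * Q s a) - V s) := by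
  set F : ℕ → ℝ := fun t => ∑ s, dd t s * V s with hF
  set G : ℕ → ℝ := fun t => ∑ s, dd t s * (∑ a, π s a * Q s a) with hG
  -- per-step identity
  have key : ∀ t, ∑ s, ∑ a, dd t s * π s a * r s a = G t - γ * F (t+1) := by
    intro t
    have hr : ∀ s a, r s a = Q s a - γ * ∑ s', Ptr s a s' * V s' := by
      intro s a; rw [hQ s a]; ring
    have hFsucc : F (t+1) = ∑ s, ∑ a, dd t s * π s a * (∑ s', Ptr s a s' * V s') := by
      simp only [hF, hsucc]
      calc ∑ s', (∑ s, ∑ a, dd t s * π s a * Ptr s a s') * V s'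
          = ∑ s', ∑ s, ∑ a, dd t s * π s a * Ptr s a s' * V s' := by
            apply Finset.sum_congr rfl; intro s' _
            rw [Finset.sum_mul]
            apply Finset.sum_congr rfl; intro s _
            rw [Finset.sum_mul]
        _ = ∑ s, ∑ s', ∑ a, dd t s * π s a * Ptr s a s' * V s' := Finset.sum_comm
        _ = ∑ s, ∑ a, ∑ s', dd t s * π s a * Ptr s a s' * V s' := by
            apply Finset.sum_congr rfl; intro s _
            exact Finset.sum_comm
        _ = ∑ s, ∑ a, dd t s * π s a * (∑ s', Ptr s a s' * V s') := by
            apply Finset.sum_congr rfl; intro s _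
            apply Finset.sum_congr rfl; intro a _
            rw [Finset.mul_sum]
            apply Finset.sum_congr rfl; intro s' _
            ring
    have hGeq : G t = ∑ s, ∑ a, dd t s * π s a * Q s a := by
      simp only [hG]
      apply Finset.sum_congr rfl; intro s _
      rw [Finset.mul_sum]
      apply Finset.sum_congr rfl; intro a _
      ring
    rw [hFsucc, hGeq, Finset.mul_sum, ← Finset.sum_sub_distrib]
    apply Finset.sum_congr rfl; intro s _
    rw [Finset.mul_sum, ← Finset.sum_sub_distrib]
    apply Finset.sum_congr rfl; intro a _
    rw [hr s a]; ring
  -- bounds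
  set CV : ℝ := ∑ s, |V s| with hCV
  set CB : ℝ := ∑ s, |(∑ a, π s a * Q s a) - V s| with hCB
  have hbd : ∀ (x : S → ℝ) t, |∑ s, dd t s * x s| ≤ ∑ s, |x s| := by
    intro x t
    calc |∑ s, dd t s * x s| ≤ ∑ s, |dd t s * x s| := Finset.abs_sum_le_sum_abs _ _
      _ ≤ ∑ s, |x s| := by
          apply Finset.sum_le_sum; intro s _
          rw [abs_mul, abs_of_nonneg ((hdd t).1 s)]
          have h1 : dd t s ≤ 1 := by
            have := Finset.single_le_sum (f := fun s => dd t s)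
              (fun s _ => (hdd t).1 s) (Finset.mem_univ s)
            rw [(hdd t).2] at this; exact this
          calc dd t s * |x s| ≤ 1 * |x s| :=
                mul_le_mul_of_nonneg_right h1 (abs_nonneg _)
            _ = |x s| := one_mul _
  have hFb : ∀ t, |F t| ≤ CV := fun t => hbd V t
  have hGFb : ∀ t, |G t - F t| ≤ CB := by
    intro t
    have : G t - F t = ∑ s, dd t s * ((∑ a, π s a * Q s a) - V s) := by
      simp only [hG, hF, ← Finset.sum_sub_distrib]
      apply Finset.sum_congr rfl; intro s _; ring
    rw [this]; exact hbd _ t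
  -- assemble
  have hpt : ∀ t, γ ^ t * ∑ s, ∑ a, dd t s * π s a * r s a
      = γ ^ t * (G t - F t) + (γ ^ t * F t - γ ^ (t+1) * F (t+1)) := by
    intro t
    rw [key t, pow_succ]
    ring
  rw [tsum_congr hpt, Summable.tsum_add (geo_summable γ hγ0 hγ1 _ CB hGFb)
    (tele_summable γ hγ0 hγ1 F CV hFb), tele_tsum γ hγ0 hγ1 F CV hFb]
  rw [add_comm]
  congr 1
  apply tsum_congr; intro t
  congr 1
  simp only [hG, hF, ← Finset.sum_sub_distrib]
  apply Finset.sum_congr rfl; intro s _; ring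



lemma dprob_aux {S A : Type*} [Fintype S] [Fintype A]
    (Ptr : S → A → S → ℝ) (hPtr : ∀ s a, (∀ s', 0 ≤ Ptr s a s') ∧ ∑ s', Ptr s a s' = 1)
    (π : S → A → ℝ) (hπ : ∀ s, (∀ a, 0 ≤ π s a) ∧ ∑ a, π s a = 1)
    (dd : ℕ → S → ℝ) (h0 : (∀ s, 0 ≤ dd 0 s) ∧ ∑ s, dd 0 s = 1)
    (hsucc : ∀ t s', dd (t+1) s' = ∑ s, ∑ a, dd t s * π s a * Ptr s a s') :
    ∀ t, (∀ s, 0 ≤ dd t s) ∧ ∑ s, dd t s = 1 := by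
  intro t
  induction t with
  | zero => exact h0
  | succ t ih =>
    constructor
    · intro s'
      rw [hsucc]
      apply Finset.sum_nonneg; intro s _
      apply Finset.sum_nonneg; intro a _
      exact mul_nonneg (mul_nonneg (ih.1 s) ((hπ s).1 a)) ((hPtr s a).1 s')
    · have : ∑ s', dd (t+1) s' = ∑ s, ∑ a, dd t s * π s a * (∑ s', Ptr s a s') := by
        simp only [hsucc]
        rw [Finset.sum_comm]
        congr 1; ext s
        rw [Finset.sum_comm]
        congr 1; ext a
        rw [← Finset.mul_sum]
      rw [this]
      have : ∀ s ∈ (univ : Finset S), ∑ a, dd t s * π s a * (∑ s', Ptr s a s') = dd t s := by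
        intro s _
        calc ∑ a, dd t s * π s a * (∑ s', Ptr s a s') = ∑ a, dd t s * π s a := by
              apply Finset.sum_congr rfl; intro a _; rw [(hPtr s a).2, mul_one]
          _ = dd t s * ∑ a, π s a := by rw [Finset.mul_sum]
          _ = dd t s := by rw [(hπ s).2, mul_one]
      rw [Finset.sum_congr rfl this, ih.2]

lemma Dbound_aux {S A : Type*} [Fintype S] [Fintype A]
    (Ptr : S → A → S → ℝ) (hPtr : ∀ s a, (∀ s', 0 ≤ Ptr s a s') ∧ ∑ s', Ptr s a s' = 1)
    (π₁ π₂ : S → A → ℝ)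
    (hπ₁ : ∀ s, (∀ a, 0 ≤ π₁ s a) ∧ ∑ a, π₁ s a = 1)
    (hπ₂ : ∀ s, (∀ a, 0 ≤ π₂ s a) ∧ ∑ a, π₂ s a = 1)
    (u v : ℕ → S → ℝ)
    (hu : ∀ t, (∀ s, 0 ≤ u t s) ∧ ∑ s, u t s = 1)
    (hv : ∀ t, (∀ s, 0 ≤ v t s) ∧ ∑ s, v t s = 1)
    (h0 : ∀ s, u 0 s = v 0 s)
    (husucc : ∀ t s', u (t+1) s' = ∑ s, ∑ a, u t s * π₁ s a * Ptr s a s')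
    (hvsucc : ∀ t s', v (t+1) s' = ∑ s, ∑ a, v t s * π₂ s a * Ptr s a s')
    (α : ℝ) (hα0 : 0 ≤ α) (hα1 : α ≤ 1)
    (hαb : ∀ s, ∑ a, |π₁ s a - π₂ s a| ≤ 2 * α) :
    ∀ t, ∑ s, |u t s - v t s| ≤ 2 * (1 - (1-α)^t) := by
  intro t
  induction t with
  | zero => simp [h0]
  | succ t ih =>
    set D := ∑ s, |u t s - v t s| with hD
    have hDnn : 0 ≤ D := Finset.sum_nonneg fun s _ => abs_nonneg _
    -- step 1
    have step1 : ∑ s', |u (t+1) s' - v (t+1) s'| ≤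
        ∑ s, ∑ a, |u t s * π₁ s a - v t s * π₂ s a| := by
      calc ∑ s', |u (t+1) s' - v (t+1) s'|
          = ∑ s', |∑ s, ∑ a, (u t s * π₁ s a - v t s * π₂ s a) * Ptr s a s'| := by
            apply Finset.sum_congr rfl; intro s' _
            rw [husucc, hvsucc, ← Finset.sum_sub_distrib]
            congr 1
            apply Finset.sum_congr rfl; intro s _
            rw [← Finset.sum_sub_distrib]
            apply Finset.sum_congr rfl; intro a _; ring
        _ ≤ ∑ s', ∑ s, ∑ a, |u t s * π₁ s a - v t s * π₂ s a| * Ptr s a s' := by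
            apply Finset.sum_le_sum; intro s' _
            calc |∑ s, ∑ a, (u t s * π₁ s a - v t s * π₂ s a) * Ptr s a s'|
                ≤ ∑ s, |∑ a, (u t s * π₁ s a - v t s * π₂ s a) * Ptr s a s'| :=
                  Finset.abs_sum_le_sum_abs _ _
              _ ≤ ∑ s, ∑ a, |u t s * π₁ s a - v t s * π₂ s a| * Ptr s a s' := by
                  apply Finset.sum_le_sum; intro s _
                  calc |∑ a, (u t s * π₁ s a - v t s * π₂ s a) * Ptr s a s'|
                      ≤ ∑ a, |(u t s * π₁ s a - v t s * π₂ s a) * Ptr s a s'| :=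
                        Finset.abs_sum_le_sum_abs _ _
                    _ = ∑ a, |u t s * π₁ s a - v t s * π₂ s a| * Ptr s a s' := by
                        apply Finset.sum_congr rfl; intro a _
                        rw [abs_mul, abs_of_nonneg ((hPtr s a).1 s')]
        _ = ∑ s, ∑ a, |u t s * π₁ s a - v t s * π₂ s a| := by
            rw [Finset.sum_comm]
            apply Finset.sum_congr rfl; intro s _
            rw [Finset.sum_comm]
            apply Finset.sum_congr rfl; intro a _
            rw [← Finset.mul_sum, (hPtr s a).2, mul_one]
    -- step 2: per-state bound
    have step2 : ∀ s, ∑ a, |u t s * π₁ s a - v t s * π₂ s a| ≤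
        min (u t s) (v t s) * (2 * α) + (u t s - min (u t s) (v t s))
          + (v t s - min (u t s) (v t s)) := by
      intro s
      set m := min (u t s) (v t s) with hm
      have hmnn : 0 ≤ m := le_min (hu t |>.1 s) (hv t |>.1 s)
      have hum : m ≤ u t s := min_le_left _ _
      have hvm : m ≤ v t s := min_le_right _ _
      calc ∑ a, |u t s * π₁ s a - v t s * π₂ s a|
          ≤ ∑ a, (m * |π₁ s a - π₂ s a| + ((u t s - m) * π₁ s a + (v t s - m) * π₂ s a)) := by
            apply Finset.sum_le_sum; intro a _
            have key : u t s * π₁ s a - v t s * π₂ s a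
                = m * (π₁ s a - π₂ s a) + ((u t s - m) * π₁ s a - (v t s - m) * π₂ s a) := by
              ring
            rw [key]
            calc |m * (π₁ s a - π₂ s a) + ((u t s - m) * π₁ s a - (v t s - m) * π₂ s a)|
                ≤ |m * (π₁ s a - π₂ s a)| + |(u t s - m) * π₁ s a - (v t s - m) * π₂ s a| :=
                  abs_add_le _ _
              _ ≤ m * |π₁ s a - π₂ s a| + ((u t s - m) * π₁ s a + (v t s - m) * π₂ s a) := by
                  apply add_le_add
                  · rw [abs_mul, abs_of_nonneg hmnn]
                  · have h1 : 0 ≤ (u t s - m) * π₁ s a :=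
                      mul_nonneg (by linarith) ((hπ₁ s).1 a)
                    have h2 : 0 ≤ (v t s - m) * π₂ s a :=
                      mul_nonneg (by linarith) ((hπ₂ s).1 a)
                    calc |(u t s - m) * π₁ s a - (v t s - m) * π₂ s a|
                        ≤ |(u t s - m) * π₁ s a| + |(v t s - m) * π₂ s a| := abs_sub _ _
                      _ = (u t s - m) * π₁ s a + (v t s - m) * π₂ s a := by
                          rw [abs_of_nonneg h1, abs_of_nonneg h2]
        _ = m * (∑ a, |π₁ s a - π₂ s a|) + ((u t s - m) * (∑ a, π₁ s a)
              + (v t s - m) * (∑ a, π₂ s a)) := by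
            rw [Finset.sum_add_distrib, Finset.sum_add_distrib, ← Finset.mul_sum,
              ← Finset.mul_sum, ← Finset.mul_sum]
        _ ≤ m * (2 * α) + ((u t s - m) + (v t s - m)) := by
            rw [(hπ₁ s).2, (hπ₂ s).2, mul_one, mul_one]
            exact add_le_add (mul_le_mul_of_nonneg_left (hαb s) hmnn) (le_refl _)
        _ = m * (2 * α) + (u t s - m) + (v t s - m) := by ring
    -- sums of min parts
    have hmin_abs : ∀ s, (u t s - min (u t s) (v t s)) + (v t s - min (u t s) (v t s))
        = |u t s - v t s| := by
      intro s
      rcases le_total (u t s) (v t s) with h | h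
      · rw [min_eq_left h, abs_of_nonpos (by linarith)]; ring
      · rw [min_eq_right h, abs_of_nonneg (by linarith)]; ring
    have hsum_min : ∑ s, min (u t s) (v t s) = 1 - D / 2 := by
      have h1 : ∑ s, ((u t s - min (u t s) (v t s)) + (v t s - min (u t s) (v t s))) = D := by
        rw [hD]; apply Finset.sum_congr rfl; intro s _; exact hmin_abs s
      have h2 : ∑ s, u t s = 1 := (hu t).2
      have h3 : ∑ s, v t s = 1 := (hv t).2
      have h4 : ∑ s, ((u t s - min (u t s) (v t s)) + (v t s - min (u t s) (v t s)))
          = 2 - 2 * ∑ s, min (u t s) (v t s) := by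
        rw [Finset.sum_add_distrib, Finset.sum_sub_distrib, Finset.sum_sub_distrib, h2, h3]
        ring
      rw [h1] at h4
      linarith
    -- combine
    calc ∑ s', |u (t+1) s' - v (t+1) s'|
        ≤ ∑ s, ∑ a, |u t s * π₁ s a - v t s * π₂ s a| := step1
      _ ≤ ∑ s, (min (u t s) (v t s) * (2 * α) + (u t s - min (u t s) (v t s))
            + (v t s - min (u t s) (v t s))) := Finset.sum_le_sum fun s _ => step2 s
      _ = (∑ s, min (u t s) (v t s)) * (2 * α) + D := by
        have hs : (∑ s, (u t s - min (u t s) (v t s)))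
            + (∑ s, (v t s - min (u t s) (v t s))) = D := by
          rw [← Finset.sum_add_distrib, hD]
          exact Finset.sum_congr rfl fun s _ => hmin_abs s
        rw [Finset.sum_add_distrib, Finset.sum_add_distrib, ← Finset.sum_mul]
        linarith
      _ = (1 - D / 2) * (2 * α) + D := by rw [hsum_min]
      _ = 2 * α + (1 - α) * D := by ring
      _ ≤ 2 * (1 - (1-α)^(t+1)) := by
        have h1 : (1 - α) * D ≤ (1 - α) * (2 * (1 - (1-α)^t)) :=
          mul_le_mul_of_nonneg_left ih (by linarith)
        have h2 : (1-α)^(t+1) = (1-α)^t * (1-α) := pow_succ _ _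
        nlinarith

lemma geom_aux (γ : ℝ) (hγ0 : 0 ≤ γ) (hγ1 : γ < 1) (α : ℝ) (hα0 : 0 ≤ α) (hα1 : α ≤ 1) :
    ∑' t : ℕ, γ ^ t * (1 - (1-α)^t) ≤ α * (γ / (1-γ)^2) := by
  have hsummG := summable_geometric_of_lt_one hγ0 hγ1
  have h1a : (0:ℝ) ≤ 1 - α := by linarith
  have hpt : ∀ t : ℕ, γ ^ t * (1 - (1-α)^t) ≤ α * (t * γ ^ t) := by
    intro t
    have hb : 1 - (t : ℝ) * α ≤ (1-α)^t := by
      have := one_add_mul_le_pow (a := -α) (by linarith) t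
      simpa [sub_eq_add_neg, mul_comm] using this
    have : 1 - (1-α)^t ≤ (t:ℝ) * α := by linarith
    calc γ ^ t * (1 - (1-α)^t) ≤ γ ^ t * ((t:ℝ) * α) :=
          mul_le_mul_of_nonneg_left this (pow_nonneg hγ0 t)
      _ = α * (t * γ ^ t) := by ring
  have hsum2 : Summable (fun t : ℕ => α * ((t:ℝ) * γ ^ t)) := by
    apply Summable.mul_left
    exact summable_pow_mul_geometric_of_norm_lt_one 1 (by rwa [Real.norm_of_nonneg hγ0]) |>.congr
      (by intro t; simp)
  have hsum1 : Summable (fun t : ℕ => γ ^ t * (1 - (1-α)^t)) := by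
    apply Summable.of_nonneg_of_le _ hpt hsum2
    intro t
    have : (1-α)^t ≤ 1 := pow_le_one₀ h1a (by linarith)
    exact mul_nonneg (pow_nonneg hγ0 t) (by linarith)
  calc ∑' t : ℕ, γ ^ t * (1 - (1-α)^t) ≤ ∑' t : ℕ, α * ((t:ℝ) * γ ^ t) :=
        Summable.tsum_le_tsum hpt hsum1 hsum2
    _ = α * ∑' t : ℕ, (t:ℝ) * γ ^ t := tsum_mul_left
    _ = α * (γ / (1-γ)^2) := by
        rw [tsum_coe_mul_geometric_of_norm_lt_one (by rwa [Real.norm_of_nonneg hγ0])]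


/-- Off-policy regret bound: for `π₂` optimal under entropy-regularized RL with reward `r`,
    `|U_r(π₁) − U_r(π₂) − Σ_t γ^t E_{s_t∼π₂}[ΔA(s_t)]| ≤ 2αγ(2α+1)ε/(1−γ)²`. -/
theorem regret_bound_off_policy {S A : Type*} [Fintype S] [Nonempty S] [Fintype A] [Nonempty A]
    (γ : ℝ) (hγ0 : 0 ≤ γ) (hγ1 : γ < 1)
    (r : S → A → ℝ) (d0 : S → ℝ) (Ptr : S → A → S → ℝ)
    (hd0 : (∀ s, 0 ≤ d0 s) ∧ ∑ s, d0 s = 1)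
    (hPtr : ∀ s a, (∀ s', 0 ≤ Ptr s a s') ∧ ∑ s', Ptr s a s' = 1)
    (π₁ π₂ : S → A → ℝ)
    (hπ₁ : ∀ s, (∀ a, 0 ≤ π₁ s a) ∧ ∑ a, π₁ s a = 1)
    (hπ₂ : ∀ s, (∀ a, 0 ≤ π₂ s a) ∧ ∑ a, π₂ s a = 1)
    (d : (S → A → ℝ) → ℕ → S → ℝ)
    (hdzero : ∀ π, d π 0 = d0)
    (hdsucc : ∀ π t s', d π (t + 1) s' = ∑ s, ∑ a, d π t s * π s a * Ptr s a s')
    (Hloc : (S → A → ℝ) → S → ℝ)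
    (hHloc : ∀ π s, Hloc π s = ∑ a, -(π s a * Real.log (π s a)))
    -- soft value functions of π₂
    (Q : S → A → ℝ) (V : S → ℝ)
    (hQ : ∀ s a, Q s a = r s a + γ * ∑ s', Ptr s a s' * V s')
    (hV : ∀ s, V s = (∑ a, π₂ s a * Q s a) + Hloc π₂ s)
    -- π₂ is optimal for entropy-regularized RL under r
    (hopt : ∀ π : S → A → ℝ, (∀ s, (∀ a, 0 ≤ π s a) ∧ ∑ a, π s a = 1) →
        (∑' t : ℕ, γ ^ t * ∑ s, ∑ a, d π t s * π s a * r s a)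
          + (∑' t : ℕ, γ ^ t * ∑ s, d π t s * Hloc π s)
        ≤ (∑' t : ℕ, γ ^ t * ∑ s, ∑ a, d π₂ t s * π₂ s a * r s a)
          + (∑' t : ℕ, γ ^ t * ∑ s, d π₂ t s * Hloc π₂ s))
    -- α : maximal total-variation distance between π₁ and π₂; ε : maximal |A_{π₂}|
    (α ε : ℝ)
    (hα : α = univ.sup' univ_nonempty (fun s => (∑ a, |π₁ s a - π₂ s a|) / 2))
    (hε : ε = univ.sup' univ_nonempty
        (fun s => univ.sup' univ_nonempty (fun a => |Q s a - V s|))) :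
    |((∑' t : ℕ, γ ^ t * ∑ s, ∑ a, d π₁ t s * π₁ s a * r s a)
        - (∑' t : ℕ, γ ^ t * ∑ s, ∑ a, d π₂ t s * π₂ s a * r s a))
      - (∑' t : ℕ, γ ^ t * ∑ s, d π₂ t s *
          (∑ a, (π₁ s a - π₂ s a) * (Q s a - V s)))|
      ≤ 2 * α * γ * (2 * α + 1) * ε / (1 - γ) ^ 2 := by
  clear hopt hHloc hV
  -- probability facts
  have hprob1 : ∀ t, (∀ s, 0 ≤ d π₁ t s) ∧ ∑ s, d π₁ t s = 1 :=
    dprob_aux Ptr hPtr π₁ hπ₁ (d π₁) (by simpa [hdzero π₁] using hd0) (hdsucc π₁)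
  have hprob2 : ∀ t, (∀ s, 0 ≤ d π₂ t s) ∧ ∑ s, d π₂ t s = 1 :=
    dprob_aux Ptr hPtr π₂ hπ₂ (d π₂) (by simpa [hdzero π₂] using hd0) (hdsucc π₂)
  -- properties of α and ε
  have hQVε : ∀ s a, |Q s a - V s| ≤ ε := by
    intro s a
    rw [hε]
    exact le_trans (Finset.le_sup' (fun a => |Q s a - V s|) (Finset.mem_univ a))
      (Finset.le_sup' (fun s => univ.sup' univ_nonempty (fun a => |Q s a - V s|))
        (Finset.mem_univ s))
  have hε0 : 0 ≤ ε :=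
    le_trans (abs_nonneg _) (hQVε (Classical.arbitrary S) (Classical.arbitrary A))
  have hαb : ∀ s, ∑ a, |π₁ s a - π₂ s a| ≤ 2 * α := by
    intro s
    have := Finset.le_sup' (fun s => (∑ a, |π₁ s a - π₂ s a|) / 2) (Finset.mem_univ s)
    rw [← hα] at this
    linarith
  have hα0 : 0 ≤ α := by
    have h1 : (0:ℝ) ≤ ∑ a, |π₁ (Classical.arbitrary S) a - π₂ (Classical.arbitrary S) a| :=
      Finset.sum_nonneg fun a _ => abs_nonneg _
    have := hαb (Classical.arbitrary S)
    linarith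
  have hα1 : α ≤ 1 := by
    rw [hα]
    apply Finset.sup'_le
    intro s _
    have h1 : ∑ a, |π₁ s a - π₂ s a| ≤ ∑ a, (π₁ s a + π₂ s a) := by
      apply Finset.sum_le_sum; intro a _
      calc |π₁ s a - π₂ s a| ≤ |π₁ s a| + |π₂ s a| := abs_sub _ _
        _ = π₁ s a + π₂ s a := by
            rw [abs_of_nonneg ((hπ₁ s).1 a), abs_of_nonneg ((hπ₂ s).1 a)]
    rw [Finset.sum_add_distrib, (hπ₁ s).2, (hπ₂ s).2] at h1
    linarith
  -- key state functions
  set A' : S → ℝ := fun s => ∑ a, (π₁ s a - π₂ s a) * (Q s a - V s) with hA'def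
  set h' : S → ℝ := fun s => (∑ a, π₂ s a * Q s a) - V s with hh'def
  set g : S → ℝ := fun s => A' s + h' s with hgdef
  have hg : ∀ s, (∑ a, π₁ s a * Q s a) - V s = g s := by
    intro s
    have e0 : ∀ a ∈ (univ : Finset A), (π₁ s a - π₂ s a) * (Q s a - V s)
        = (π₁ s a * Q s a - π₂ s a * Q s a) - (π₁ s a * V s - π₂ s a * V s) := by
      intro a _; ring
    have e1 : A' s = (∑ a, π₁ s a * Q s a) - (∑ a, π₂ s a * Q s a) := by
      simp only [hA'def]
      rw [Finset.sum_congr rfl e0, Finset.sum_sub_distrib, Finset.sum_sub_distrib,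
        Finset.sum_sub_distrib, ← Finset.sum_mul, ← Finset.sum_mul,
        (hπ₁ s).2, (hπ₂ s).2]
      ring
    simp only [hgdef, hh'def, e1]
    ring
  -- pointwise bounds
  have hA'b : ∀ s, |A' s| ≤ 2 * α * ε := by
    intro s
    calc |A' s| ≤ ∑ a, |(π₁ s a - π₂ s a) * (Q s a - V s)| := Finset.abs_sum_le_sum_abs _ _
      _ ≤ ∑ a, |π₁ s a - π₂ s a| * ε := by
          apply Finset.sum_le_sum; intro a _
          rw [abs_mul]
          exact mul_le_mul_of_nonneg_left (hQVε s a) (abs_nonneg _)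
      _ = (∑ a, |π₁ s a - π₂ s a|) * ε := by rw [Finset.sum_mul]
      _ ≤ 2 * α * ε := mul_le_mul_of_nonneg_right (hαb s) hε0
  have hh'b : ∀ s, |h' s| ≤ ε := by
    intro s
    have e : h' s = ∑ a, π₂ s a * (Q s a - V s) := by
      simp only [hh'def, mul_sub]
      rw [Finset.sum_sub_distrib, ← Finset.sum_mul, (hπ₂ s).2, one_mul]
    rw [e]
    exact wsum_abs_le (π₂ s) (fun a => Q s a - V s) (hπ₂ s).1 (hπ₂ s).2 ε (fun a => hQVε s a)
  set Cg : ℝ := 2 * α * ε + ε with hCgdef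
  have hCg0 : 0 ≤ Cg := by
    have : 0 ≤ 2 * α * ε := by positivity
    simp only [hCgdef]; linarith
  have hgb : ∀ s, |g s| ≤ Cg := by
    intro s
    simp only [hgdef, hCgdef]
    exact le_trans (abs_add_le _ _) (add_le_add (hA'b s) (hh'b s))
  -- value identities
  have hid1 := value_identity γ hγ0 hγ1 r Ptr hPtr π₁ hπ₁ (d π₁) hprob1 (hdsucc π₁) Q V hQ
  have hid2 := value_identity γ hγ0 hγ1 r Ptr hPtr π₂ hπ₂ (d π₂) hprob2 (hdsucc π₂) Q V hQ
  -- summabilities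
  have hs1 : Summable (fun t : ℕ => γ ^ t * ∑ s, d π₁ t s * g s) :=
    geo_summable γ hγ0 hγ1 _ Cg (fun t =>
      wsum_abs_le (d π₁ t) g (hprob1 t).1 (hprob1 t).2 Cg hgb)
  have hs2 : Summable (fun t : ℕ => γ ^ t * ∑ s, d π₂ t s * h' s) :=
    geo_summable γ hγ0 hγ1 _ ε (fun t =>
      wsum_abs_le (d π₂ t) h' (hprob2 t).1 (hprob2 t).2 ε hh'b)
  have hsΔ : Summable (fun t : ℕ => γ ^ t * ∑ s, d π₂ t s * A' s) :=
    geo_summable γ hγ0 hγ1 _ (2 * α * ε) (fun t =>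
      wsum_abs_le (d π₂ t) A' (hprob2 t).1 (hprob2 t).2 (2 * α * ε) hA'b)
  -- rewrite the three tsums
  have hS1eq : (∑' t : ℕ, γ ^ t * ∑ s, d π₁ t s * ((∑ a, π₁ s a * Q s a) - V s))
      = ∑' t : ℕ, γ ^ t * ∑ s, d π₁ t s * g s := by
    apply tsum_congr; intro t
    congr 1
    exact Finset.sum_congr rfl fun s _ => by rw [hg s]
  have hmain : ((∑' t : ℕ, γ ^ t * ∑ s, ∑ a, d π₁ t s * π₁ s a * r s a)
        - (∑' t : ℕ, γ ^ t * ∑ s, ∑ a, d π₂ t s * π₂ s a * r s a))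
      - (∑' t : ℕ, γ ^ t * ∑ s, d π₂ t s * A' s)
      = ∑' t : ℕ, γ ^ t * ∑ s, (d π₁ t s - d π₂ t s) * g s := by
    rw [hid1, hid2, hdzero π₁, hdzero π₂, hS1eq]
    have hS2fold : (∑' t : ℕ, γ ^ t * ∑ s, d π₂ t s * ((∑ a, π₂ s a * Q s a) - V s))
        = ∑' t : ℕ, γ ^ t * ∑ s, d π₂ t s * h' s := by
      apply tsum_congr; intro t
      congr 1
    rw [hS2fold]
    have step : (∑' t : ℕ, γ ^ t * ∑ s, d π₁ t s * g s)
        - (∑' t : ℕ, γ ^ t * ∑ s, d π₂ t s * h' s)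
        - (∑' t : ℕ, γ ^ t * ∑ s, d π₂ t s * A' s)
        = ∑' t : ℕ, γ ^ t * ∑ s, (d π₁ t s - d π₂ t s) * g s := by
      rw [← Summable.tsum_sub hs1 hs2, ← Summable.tsum_sub (hs1.sub hs2) hsΔ]
      apply tsum_congr; intro t
      have e : ∑ s, (d π₁ t s - d π₂ t s) * g s
          = (∑ s, d π₁ t s * g s) - ((∑ s, d π₂ t s * h' s) + (∑ s, d π₂ t s * A' s)) := by
        have e0 : ∀ s ∈ (univ : Finset S), (d π₁ t s - d π₂ t s) * g s
            = d π₁ t s * g s - (d π₂ t s * h' s + d π₂ t s * A' s) := by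
          intro s _
          simp only [hgdef]
          ring
        rw [Finset.sum_congr rfl e0, Finset.sum_sub_distrib, Finset.sum_add_distrib]
      rw [e]
      ring
    rw [← step]
    ring
  rw [hmain]
  -- distance bound
  have hD : ∀ t, ∑ s, |d π₁ t s - d π₂ t s| ≤ 2 * (1 - (1-α)^t) :=
    Dbound_aux Ptr hPtr π₁ π₂ hπ₁ hπ₂ (d π₁) (d π₂) hprob1 hprob2
      (by intro s; rw [hdzero π₁, hdzero π₂]) (hdsucc π₁) (hdsucc π₂) α hα0 hα1 hαb
  have hfb : ∀ t : ℕ, |γ ^ t * ∑ s, (d π₁ t s - d π₂ t s) * g s|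
      ≤ γ ^ t * (2 * (1 - (1-α)^t)) * Cg := by
    intro t
    have h1 : |∑ s, (d π₁ t s - d π₂ t s) * g s|
        ≤ (∑ s, |d π₁ t s - d π₂ t s|) * Cg := by
      calc |∑ s, (d π₁ t s - d π₂ t s) * g s|
          ≤ ∑ s, |(d π₁ t s - d π₂ t s) * g s| := Finset.abs_sum_le_sum_abs _ _
        _ ≤ ∑ s, |d π₁ t s - d π₂ t s| * Cg := by
            apply Finset.sum_le_sum; intro s _
            rw [abs_mul]
            exact mul_le_mul_of_nonneg_left (hgb s) (abs_nonneg _)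
        _ = (∑ s, |d π₁ t s - d π₂ t s|) * Cg := by rw [Finset.sum_mul]
    rw [abs_mul, abs_pow, abs_of_nonneg hγ0, mul_assoc]
    apply mul_le_mul_of_nonneg_left _ (pow_nonneg hγ0 t)
    calc |∑ s, (d π₁ t s - d π₂ t s) * g s|
        ≤ (∑ s, |d π₁ t s - d π₂ t s|) * Cg := h1
      _ ≤ (2 * (1 - (1-α)^t)) * Cg := mul_le_mul_of_nonneg_right (hD t) hCg0
  have h1αt : ∀ t : ℕ, 0 ≤ 1 - (1-α)^t := by
    intro t
    have : (1-α)^t ≤ 1 := pow_le_one₀ (by linarith) (by linarith)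
    linarith
  have hbsum : Summable (fun t : ℕ => γ ^ t * (2 * (1 - (1-α)^t)) * Cg) := by
    apply Summable.of_norm_bounded (g := fun t => (2 * Cg) * γ ^ t)
      ((summable_geometric_of_lt_one hγ0 hγ1).mul_left (2 * Cg))
    intro t
    have h2 : (1-α)^t ≤ 1 := pow_le_one₀ (by linarith) (by linarith)
    have h3 : (0:ℝ) ≤ (1-α)^t := pow_nonneg (by linarith) t
    rw [Real.norm_eq_abs, abs_of_nonneg (mul_nonneg (mul_nonneg (pow_nonneg hγ0 t)
      (by linarith [h1αt t])) hCg0)]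
    have : 2 * (1 - (1-α)^t) ≤ 2 := by linarith
    calc γ ^ t * (2 * (1 - (1-α)^t)) * Cg ≤ γ ^ t * 2 * Cg := by
          apply mul_le_mul_of_nonneg_right _ hCg0
          exact mul_le_mul_of_nonneg_left this (pow_nonneg hγ0 t)
      _ = (2 * Cg) * γ ^ t := by ring
  have hfsum : Summable (fun t : ℕ => ‖γ ^ t * ∑ s, (d π₁ t s - d π₂ t s) * g s‖) := by
    apply Summable.of_norm_bounded (g := fun t => (2 * Cg) * γ ^ t)
      ((summable_geometric_of_lt_one hγ0 hγ1).mul_left (2 * Cg))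
    intro t
    simp only [Real.norm_eq_abs, abs_abs]
    calc |γ ^ t * ∑ s, (d π₁ t s - d π₂ t s) * g s|
        ≤ γ ^ t * (2 * (1 - (1-α)^t)) * Cg := hfb t
      _ ≤ (2 * Cg) * γ ^ t := by
          have h3 : (0:ℝ) ≤ (1-α)^t := pow_nonneg (by linarith) t
          have h2 : 2 * (1 - (1-α)^t) ≤ 2 := by linarith
          calc γ ^ t * (2 * (1 - (1-α)^t)) * Cg ≤ γ ^ t * 2 * Cg := by
                apply mul_le_mul_of_nonneg_right _ hCg0
                exact mul_le_mul_of_nonneg_left h2 (pow_nonneg hγ0 t)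
            _ = (2 * Cg) * γ ^ t := by ring
  calc |∑' t : ℕ, γ ^ t * ∑ s, (d π₁ t s - d π₂ t s) * g s|
      ≤ ∑' t : ℕ, ‖γ ^ t * ∑ s, (d π₁ t s - d π₂ t s) * g s‖ :=
        norm_tsum_le_tsum_norm hfsum
    _ ≤ ∑' t : ℕ, γ ^ t * (2 * (1 - (1-α)^t)) * Cg := by
        apply Summable.tsum_le_tsum _ hfsum hbsum
        intro t
        rw [Real.norm_eq_abs]
        exact hfb t
    _ = (2 * Cg) * ∑' t : ℕ, γ ^ t * (1 - (1-α)^t) := by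
        rw [← tsum_mul_left]
        apply tsum_congr; intro t; ring
    _ ≤ (2 * Cg) * (α * (γ / (1-γ)^2)) := by
        apply mul_le_mul_of_nonneg_left (geom_aux γ hγ0 hγ1 α hα0 hα1) (by linarith)
    _ = 2 * α * γ * (2 * α + 1) * ε / (1 - γ) ^ 2 := by
        simp only [hCgdef]
        ring
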